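/- Let n, m ≥ 1, let a₁, …, a_m be real numbers, and let u₁, …, u_m, v be independent random vectors in ℝⁿ, each distributed as the standard n-dimensional Gaussian N(0, I_n). Define ψ(x, y) = (xᵀy)²/n − (xᵀx)(yᵀy)/n². Then almost surely E[ ( Σ_{i=1}^{m} aᵢ ψ(uᵢ, v) )² | u₁, …, u_m ] = (2/n) Σ_{i=1}^{m} Σ_{k=1}^{m} aᵢ a_k ψ(uᵢ, u_k), where the conditioning is on the σ-algebra generated by (u₁, …, u_m). -/

import Mathlib

open MeasureTheory ProbabilityTheory Filter

/-- The standard Gaussian measure on `ℝⁿ`: the `n`-fold product of the standard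
Gaussian measure on `ℝ`. -/
noncomputable def stdGaussian (n : ℕ) : Measure (Fin n → ℝ) :=
  Measure.pi fun _ => gaussianReal 0 1

/-- `ψ(x, y) = (xᵀy)²/n − (xᵀx)(yᵀy)/n²`. -/
noncomputable def psi (n : ℕ) (x y : Fin n → ℝ) : ℝ :=
  (∑ i, x i * y i) ^ 2 / n - ((∑ i, x i * x i) * (∑ i, y i * y i)) / n ^ 2

open Real

section AuxiliaryLemmas

noncomputable def mom (k : ℕ) : ℝ := ∫ x, x ^ k ∂(gaussianReal 0 1)

lemma integral_gaussianReal_eq (g : ℝ → ℝ) :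
    ∫ x, g x ∂(gaussianReal 0 1) = ∫ x, gaussianPDFReal 0 1 x * g x := by
  rw [gaussianReal_of_var_ne_zero 0 one_ne_zero]
  have h : (gaussianPDF 0 1) = fun x => ((gaussianPDFReal 0 1 x).toNNReal : ENNReal) := rfl
  rw [h, integral_withDensity_eq_integral_smul
    ((measurable_gaussianPDFReal 0 1).real_toNNReal) g]
  congr 1 with x
  simp [NNReal.smul_def, Real.coe_toNNReal _ (gaussianPDFReal_nonneg 0 1 x)]

lemma integral_comp_neg_real (f : ℝ → ℝ) : ∫ x, f (-x) = ∫ x, f x :=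
  (Measure.measurePreserving_neg (volume : Measure ℝ)).integral_comp
    (Homeomorph.neg ℝ).isClosedEmbedding.measurableEmbedding f

lemma integral_odd_zero (f : ℝ → ℝ) (hf : ∀ x, f (-x) = - f x) : ∫ x, f x = 0 := by
  have h := integral_comp_neg_real f
  simp_rw [hf, integral_neg] at h
  linarith

lemma mom_zero : mom 0 = 1 := by simp [mom]

lemma mom_odd (k : ℕ) (hk : Odd k) : mom k = 0 := by
  rw [mom, integral_gaussianReal_eq]
  refine integral_odd_zero _ fun x => ?_
  simp only [gaussianPDFReal]
  rw [hk.neg_pow]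
  ring_nf

lemma int_Ioi_even (k : ℕ) :
    ∫ x in Set.Ioi (0:ℝ), x ^ k * Real.exp (-x^2/2)
      = ((1:ℝ)/2) ^ (-((k:ℝ)+1)/2) * (1/2) * Real.Gamma (((k:ℝ)+1)/2) := by
  have h := integral_rpow_mul_exp_neg_mul_rpow (p := 2) (q := (k:ℝ)) (b := 1/2)
    two_pos (by linarith [Nat.cast_nonneg (α := ℝ) k]) one_half_pos
  rw [← h]
  refine setIntegral_congr_fun measurableSet_Ioi fun x hx => ?_
  rw [show ((2:ℝ)) = ((2:ℕ):ℝ) by norm_num, Real.rpow_natCast, Real.rpow_natCast]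
  ring_nf

lemma sqrt8 : Real.sqrt 8 = 2 * Real.sqrt 2 := by
  rw [show (8:ℝ) = 2^2 * 2 by norm_num, Real.sqrt_mul (by positivity), Real.sqrt_sq (by norm_num)]

lemma sqrt32 : Real.sqrt 32 = 4 * Real.sqrt 2 := by
  rw [show (32:ℝ) = 4^2 * 2 by norm_num, Real.sqrt_mul (by positivity), Real.sqrt_sq (by norm_num)]

lemma half_rpow (a : ℝ) : ((1:ℝ)/2) ^ (-a) = (2:ℝ) ^ a := by
  rw [one_div, Real.inv_rpow (by norm_num), Real.rpow_neg (by norm_num), inv_inv]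

lemma rpow_32 : (2:ℝ) ^ ((3:ℝ)/2) = Real.sqrt 8 := by
  rw [show ((3:ℝ)/2) = (3:ℕ) * (1/2 : ℝ) by norm_num, Real.rpow_mul (by norm_num),
    Real.rpow_natCast, ← Real.sqrt_eq_rpow]
  norm_num

lemma rpow_52 : (2:ℝ) ^ ((5:ℝ)/2) = Real.sqrt 32 := by
  rw [show ((5:ℝ)/2) = (5:ℕ) * (1/2 : ℝ) by norm_num, Real.rpow_mul (by norm_num),
    Real.rpow_natCast, ← Real.sqrt_eq_rpow]
  norm_num

lemma gamma_32 : Real.Gamma (3/2) = Real.sqrt π / 2 := by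
  rw [show ((3:ℝ)/2) = 1/2 + 1 by norm_num, Real.Gamma_add_one (by norm_num),
    Real.Gamma_one_half_eq]
  ring

lemma gamma_52 : Real.Gamma (5/2) = 3 * Real.sqrt π / 4 := by
  rw [show ((5:ℝ)/2) = 3/2 + 1 by norm_num, Real.Gamma_add_one (by norm_num), gamma_32]
  ring

lemma mom_even_aux (k : ℕ) (hk : Even k) :
    mom k = (Real.sqrt (2 * π))⁻¹ *
      (2 * (((1:ℝ)/2) ^ (-((k:ℝ)+1)/2) * (1/2) * Real.Gamma (((k:ℝ)+1)/2))) := by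
  rw [mom, integral_gaussianReal_eq, ← int_Ioi_even k, ← integral_comp_abs
    (f := fun x => x ^ k * Real.exp (-x^2/2)), ← integral_const_mul]
  congr 1 with x
  simp only [gaussianPDFReal]
  rw [hk.pow_abs, sq_abs]
  push_cast
  ring_nf

lemma mom_two : mom 2 = 1 := by
  rw [mom_even_aux 2 (by norm_num)]
  norm_num
  rw [half_rpow, rpow_32, sqrt8, gamma_32]
  have h2 : Real.sqrt 2 > 0 := by positivity
  have hp : Real.sqrt π > 0 := Real.sqrt_pos.mpr Real.pi_pos
  field_simp

lemma mom_four : mom 4 = 3 := by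
  rw [mom_even_aux 4 (by decide)]
  norm_num
  rw [half_rpow, rpow_52, sqrt32, gamma_52]
  have h2 : Real.sqrt 2 > 0 := by positivity
  have hp : Real.sqrt π > 0 := Real.sqrt_pos.mpr Real.pi_pos
  field_simp

lemma integrable_pow_gaussian (k : ℕ) : Integrable (fun x => x ^ k) (gaussianReal 0 1) := by
  rw [gaussianReal_of_var_ne_zero 0 one_ne_zero]
  rw [integrable_withDensity_iff (measurable_gaussianPDF 0 1) (ae_of_all _ fun x => ENNReal.ofReal_lt_top)]
  have h := integrable_rpow_mul_exp_neg_mul_sq (b := 1/2) one_half_pos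
    (s := (k:ℝ)) (by linarith [Nat.cast_nonneg (α := ℝ) k])
  apply Integrable.congr ((h.const_mul ((Real.sqrt (2*π))⁻¹)))
  refine ae_of_all _ fun x => ?_
  simp only [gaussianPDF, gaussianPDFReal]
  rw [Real.rpow_natCast]
  push_cast
  ring_nf
  rw [ENNReal.toReal_ofReal (by positivity)]
  ring

instance stdGaussian_prob (n : ℕ) : IsProbabilityMeasure (stdGaussian n) := by
  unfold _root_.stdGaussian; infer_instance

lemma integral_monomial (n : ℕ) (e : Fin n → ℕ) :
    ∫ v, (∏ t, v t ^ e t) ∂(stdGaussian n) = ∏ t, mom (e t) := by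
  letI : MeasureSpace ℝ := ⟨gaussianReal 0 1⟩
  haveI : SigmaFinite (volume : Measure ℝ) := (inferInstance : SigmaFinite (gaussianReal 0 1))
  exact MeasureTheory.integral_fintype_prod_eq_prod (fun t y => y ^ e t)

lemma integrable_monomial (n : ℕ) (e : Fin n → ℕ) :
    Integrable (fun v => ∏ t, v t ^ e t) (stdGaussian n) := by
  letI : MeasureSpace ℝ := ⟨gaussianReal 0 1⟩
  haveI : SigmaFinite (volume : Measure ℝ) := (inferInstance : SigmaFinite (gaussianReal 0 1))
  exact Integrable.fintype_prod (fun t => integrable_pow_gaussian (e t))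

def expo {n : ℕ} (i j k l : Fin n) (t : Fin n) : ℕ :=
  (if i = t then 1 else 0) + (if j = t then 1 else 0) + (if k = t then 1 else 0) +
    (if l = t then 1 else 0)

lemma prod_pow_ind {n : ℕ} (i : Fin n) (v : Fin n → ℝ) :
    ∏ t, v t ^ (if i = t then 1 else 0) = v i := by
  simp [pow_ite, Finset.prod_ite_eq]

lemma mul4_eq_prod {n : ℕ} (i j k l : Fin n) (v : Fin n → ℝ) :
    v i * v j * v k * v l = ∏ t, v t ^ expo i j k l t := by
  simp only [expo, pow_add, Finset.prod_mul_distrib, prod_pow_ind]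

lemma integrable_four (n : ℕ) (i j k l : Fin n) :
    Integrable (fun v => v i * v j * v k * v l) (stdGaussian n) := by
  simp_rw [mul4_eq_prod]; exact integrable_monomial n _

lemma integral_four (n : ℕ) (i j k l : Fin n) :
    ∫ v, v i * v j * v k * v l ∂(stdGaussian n)
      = (if i = j then (1:ℝ) else 0) * (if k = l then 1 else 0)
        + (if i = k then 1 else 0) * (if j = l then 1 else 0)
        + (if i = l then 1 else 0) * (if j = k then 1 else 0) := by
  have m1 : mom 1 = 0 := mom_odd 1 ⟨0, rfl⟩
  have m3 : mom 3 = 0 := mom_odd 3 ⟨1, rfl⟩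
  simp_rw [mul4_eq_prod]
  rw [integral_monomial]
  by_cases hij : i = j
  · subst hij
    by_cases hkl : k = l
    · subst hkl
      by_cases hik : i = k
      · subst hik
        rw [Finset.prod_eq_single i (fun b _ hb => by simp [expo, Ne.symm hb, mom_zero])
          (by simp)]
        simp [expo, mom_four]
        norm_num
      · rw [Finset.prod_eq_one (fun t _ => ?_)]
        · simp [hik, fun h : i = k => hik h]
        · by_cases h1 : i = t
          · subst h1; simp [expo, show ¬k = i from fun h => hik h.symm, mom_two]
          · by_cases h2 : k = t
            · subst h2; simp [expo, hik, mom_two]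
            · simp [expo, h1, h2, mom_zero]
    · rw [Finset.prod_eq_zero (Finset.mem_univ k) (by
        by_cases hik : i = k
        · simp [expo, hik, Ne.symm hkl, m3]
        · simp [expo, hik, Ne.symm hkl, m1])]
      by_cases hik : i = k
      · by_cases hil : i = l
        · exact absurd (hik ▸ hil) hkl
        · simp [hkl, hil]
      · simp [hkl, hik]
  · by_cases hkl : k = l
    · subst hkl
      rw [Finset.prod_eq_zero (Finset.mem_univ i) (by
        by_cases hik : k = i
        · simp [expo, hik, Ne.symm hij, m3]
        · simp [expo, hik, Ne.symm hij, m1])]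
      by_cases hik : i = k
      · by_cases hjk : j = k
        · exact absurd (hjk ▸ hik) hij
        · simp [hij, hjk]
      · simp [hij, hik]
    · by_cases hik : i = k
      · subst hik
        by_cases hjl : j = l
        · subst hjl
          rw [Finset.prod_eq_one (fun t _ => ?_)]
          · simp [hij, fun h : i = j => hij h]
          · by_cases h1 : i = t
            · subst h1; simp [expo, Ne.symm hij, hkl, mom_two]
            · by_cases h2 : j = t
              · subst h2; simp [expo, hij, mom_two]
              · simp [expo, h1, h2, mom_zero]
        · rw [Finset.prod_eq_zero (Finset.mem_univ j) (by
            simp [expo, hij, Ne.symm hjl, m1])]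
          simp [hij, hjl, hkl]
      · by_cases hil : i = l
        · subst hil
          by_cases hjk : j = k
          · subst hjk
            rw [Finset.prod_eq_one (fun t _ => ?_)]
            · simp [hij, fun h : i = j => hij h, hik]
            · by_cases h1 : i = t
              · subst h1; simp [expo, Ne.symm hij, Ne.symm hik, mom_two]
              · by_cases h2 : j = t
                · subst h2; simp [expo, hij, mom_two]
                · simp [expo, h1, h2, mom_zero]
          · rw [Finset.prod_eq_zero (Finset.mem_univ j) (by
              simp [expo, hij, Ne.symm hjk, m1])]
            simp [hij, hik, hjk]
        · rw [Finset.prod_eq_zero (Finset.mem_univ i) (by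
            simp [expo, Ne.symm hij, Ne.symm hik, Ne.symm hil, m1])]
          simp [hij, hik, hil]

noncomputable def cf (n : ℕ) (x : Fin n → ℝ) (i j : Fin n) : ℝ :=
  x i * x j / n - (if i = j then (1:ℝ) else 0) * ((∑ t, x t * x t) / n ^ 2)

lemma psi_expand (n : ℕ) (x v : Fin n → ℝ) :
    psi n x v = ∑ i, ∑ j, cf n x i j * (v i * v j) := by
  simp only [cf, sub_mul, Finset.sum_sub_distrib, ite_mul, one_mul, zero_mul,
    Finset.sum_ite_eq, Finset.mem_univ, if_true]
  rw [psi]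
  congr 1
  · rw [sq, Finset.sum_mul_sum, Finset.sum_div]
    refine Finset.sum_congr rfl fun i _ => ?_
    rw [Finset.sum_div]
    exact Finset.sum_congr rfl fun j _ => by ring
  · rw [mul_comm, mul_div_assoc, Finset.sum_mul]
    exact Finset.sum_congr rfl fun i _ => by ring

lemma double_sum_mul (n : ℕ) (A B : Fin n → Fin n → ℝ) :
    (∑ i, ∑ j, A i j) * (∑ k, ∑ l, B k l) = ∑ i, ∑ j, ∑ k, ∑ l, A i j * B k l := by
  rw [Finset.sum_mul_sum]
  refine Finset.sum_congr rfl fun i _ => ?_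
  calc ∑ k, (∑ j, A i j) * (∑ l, B k l)
      = ∑ k, ∑ j, ∑ l, A i j * B k l := by
        refine Finset.sum_congr rfl fun k _ => ?_
        rw [Finset.sum_mul_sum]
    _ = ∑ j, ∑ k, ∑ l, A i j * B k l := Finset.sum_comm

lemma psi_mul_expand (n : ℕ) (x z v : Fin n → ℝ) :
    psi n x v * psi n z v
      = ∑ i, ∑ j, ∑ k, ∑ l, cf n x i j * cf n z k l * (v i * v j * v k * v l) := by
  rw [psi_expand n x v, psi_expand n z v, double_sum_mul]
  refine Finset.sum_congr rfl fun i _ => Finset.sum_congr rfl fun j _ =>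
    Finset.sum_congr rfl fun k _ => Finset.sum_congr rfl fun l _ => by ring

lemma integrable_psi_mul (n : ℕ) (x z : Fin n → ℝ) :
    Integrable (fun v => psi n x v * psi n z v) (stdGaussian n) := by
  have : (fun v => psi n x v * psi n z v)
      = fun v => ∑ i, ∑ j, ∑ k, ∑ l, cf n x i j * cf n z k l * (v i * v j * v k * v l) := by
    funext v; exact psi_mul_expand n x z v
  rw [this]
  refine integrable_finset_sum _ fun i _ => integrable_finset_sum _ fun j _ =>
    integrable_finset_sum _ fun k _ => integrable_finset_sum _ fun l _ => ?_
  exact (integrable_four n i j k l).const_mul _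

lemma sum_trace (n : ℕ) (hn : 1 ≤ n) (x : Fin n → ℝ) : ∑ i, cf n x i i = 0 := by
  have hne : (n:ℝ) ≠ 0 := Nat.cast_ne_zero.mpr (by omega)
  simp only [cf, if_pos rfl, one_mul]
  rw [Finset.sum_sub_distrib, ← Finset.sum_div, Finset.sum_const, Finset.card_univ,
    Fintype.card_fin, nsmul_eq_mul]
  field_simp
  simp

lemma sum_cc (n : ℕ) (hn : 1 ≤ n) (x z : Fin n → ℝ) :
    ∑ i, ∑ j, cf n x i j * cf n z i j = (1/n) * psi n x z := by
  have hne : (n:ℝ) ≠ 0 := Nat.cast_ne_zero.mpr (by omega)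
  have expand : ∀ i j, cf n x i j * cf n z i j
      = x i * x j * (z i * z j) / n^2
        - (if i = j then (1:ℝ) else 0) * (x i * x j * ((∑ t, z t * z t)) / n^3)
        - (if i = j then (1:ℝ) else 0) * (z i * z j * ((∑ t, x t * x t)) / n^3)
        + (if i = j then (1:ℝ) else 0) * ((∑ t, x t * x t) * (∑ t, z t * z t) / n^4) := by
    intro i j
    by_cases h : i = j
    · subst h; simp [cf]; ring
    · simp only [cf, if_neg h]; ring
  simp only [expand]
  simp only [Finset.sum_add_distrib, Finset.sum_sub_distrib, ite_mul, one_mul, zero_mul,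
    Finset.sum_ite_eq, Finset.mem_univ, if_true]
  rw [psi]
  have h1 : ∑ i, ∑ j, x i * x j * (z i * z j) / n^2 = (∑ i, x i * z i)^2 / n^2 := by
    rw [pow_two (∑ i, x i * z i), Finset.sum_mul_sum, Finset.sum_div]
    refine Finset.sum_congr rfl fun i _ => ?_
    rw [Finset.sum_div]
    exact Finset.sum_congr rfl fun j _ => by ring
  have h2 : ∑ i, x i * x i * (∑ t, z t * z t) / n^3
      = (∑ t, x t * x t) * (∑ t, z t * z t) / n^3 := by
    rw [← Finset.sum_div, ← Finset.sum_mul]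
  have h3 : ∑ i, z i * z i * (∑ t, x t * x t) / n^3
      = (∑ t, x t * x t) * (∑ t, z t * z t) / n^3 := by
    rw [← Finset.sum_div, ← Finset.sum_mul, mul_comm]
  have h4 : ∑ _i : Fin n, (∑ t, x t * x t) * (∑ t, z t * z t) / n^4
      = n * ((∑ t, x t * x t) * (∑ t, z t * z t)) / n^4 := by
    rw [Finset.sum_const, Finset.card_univ, Fintype.card_fin, nsmul_eq_mul]
    ring
  rw [h1, h2, h3, h4]
  field_simp
  ring

lemma cf_symm (n : ℕ) (x : Fin n → ℝ) (i j : Fin n) : cf n x j i = cf n x i j := by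
  simp only [cf]
  by_cases h : i = j
  · simp [h]
  · simp [h, Ne.symm h]; ring

lemma integral_psi_mul (n : ℕ) (hn : 1 ≤ n) (x z : Fin n → ℝ) :
    ∫ v, psi n x v * psi n z v ∂(stdGaussian n) = (2 / n) * psi n x z := by
  have key : ∫ v, psi n x v * psi n z v ∂(stdGaussian n)
      = ∑ i, ∑ j, ∑ k, ∑ l, cf n x i j * cf n z k l *
          ((if i = j then (1:ℝ) else 0) * (if k = l then 1 else 0)
            + (if i = k then 1 else 0) * (if j = l then 1 else 0)
            + (if i = l then 1 else 0) * (if j = k then 1 else 0)) := by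
    have h : (fun v => psi n x v * psi n z v)
        = fun v => ∑ i, ∑ j, ∑ k, ∑ l, cf n x i j * cf n z k l * (v i * v j * v k * v l) := by
      funext v; exact psi_mul_expand n x z v
    rw [h]
    rw [integral_finset_sum _ fun i _ => integrable_finset_sum _ fun j _ =>
      integrable_finset_sum _ fun k _ => integrable_finset_sum _ fun l _ =>
        (integrable_four n i j k l).const_mul _]
    refine Finset.sum_congr rfl fun i _ => ?_
    rw [integral_finset_sum _ fun j _ => integrable_finset_sum _ fun k _ =>
      integrable_finset_sum _ fun l _ => (integrable_four n i j k l).const_mul _]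
    refine Finset.sum_congr rfl fun j _ => ?_
    rw [integral_finset_sum _ fun k _ => integrable_finset_sum _ fun l _ =>
      (integrable_four n i j k l).const_mul _]
    refine Finset.sum_congr rfl fun k _ => ?_
    rw [integral_finset_sum _ fun l _ => (integrable_four n i j k l).const_mul _]
    refine Finset.sum_congr rfl fun l _ => ?_
    rw [integral_const_mul, integral_four]
  rw [key]
  have split : ∀ i j k l : Fin n, cf n x i j * cf n z k l *
          ((if i = j then (1:ℝ) else 0) * (if k = l then 1 else 0)
            + (if i = k then 1 else 0) * (if j = l then 1 else 0)
            + (if i = l then 1 else 0) * (if j = k then 1 else 0))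
      = cf n x i j * cf n z k l * ((if i = j then (1:ℝ) else 0) * (if k = l then 1 else 0))
        + cf n x i j * cf n z k l * ((if i = k then (1:ℝ) else 0) * (if j = l then 1 else 0))
        + cf n x i j * cf n z k l * ((if i = l then (1:ℝ) else 0) * (if j = k then 1 else 0)) :=
    fun i j k l => by ring
  simp only [split, Finset.sum_add_distrib]
  have T1 : ∑ i, ∑ j, ∑ k, ∑ l : Fin n, cf n x i j * cf n z k l *
      ((if i = j then (1:ℝ) else 0) * (if k = l then 1 else 0)) = 0 := by
    have : ∀ i j k l : Fin n, cf n x i j * cf n z k l *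
        ((if i = j then (1:ℝ) else 0) * (if k = l then 1 else 0))
        = (if i = j then (if k = l then cf n x i j * cf n z k l else 0) else 0) := by
      intro i j k l; by_cases h1 : i = j <;> by_cases h2 : k = l <;> simp [h1, h2]
    simp only [this, Finset.sum_ite_irrel, Finset.sum_const_zero, Finset.sum_ite_eq,
      Finset.mem_univ, if_true]
    rw [show (∑ i, ∑ k : Fin n, cf n x i i * cf n z k k)
      = (∑ i, cf n x i i) * (∑ k, cf n z k k) by rw [Finset.sum_mul_sum]]
    rw [sum_trace n hn x, zero_mul]
  have T2 : ∑ i, ∑ j, ∑ k, ∑ l : Fin n, cf n x i j * cf n z k l *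
      ((if i = k then (1:ℝ) else 0) * (if j = l then 1 else 0)) = (1/n) * psi n x z := by
    have : ∀ i j k l : Fin n, cf n x i j * cf n z k l *
        ((if i = k then (1:ℝ) else 0) * (if j = l then 1 else 0))
        = (if i = k then (if j = l then cf n x i j * cf n z k l else 0) else 0) := by
      intro i j k l; by_cases h1 : i = k <;> by_cases h2 : j = l <;> simp [h1, h2]
    simp only [this, Finset.sum_ite_irrel, Finset.sum_const_zero, Finset.sum_ite_eq,
      Finset.mem_univ, if_true]
    exact sum_cc n hn x z
  have T3 : ∑ i, ∑ j, ∑ k, ∑ l : Fin n, cf n x i j * cf n z k l *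
      ((if i = l then (1:ℝ) else 0) * (if j = k then 1 else 0)) = (1/n) * psi n x z := by
    have : ∀ i j k l : Fin n, cf n x i j * cf n z k l *
        ((if i = l then (1:ℝ) else 0) * (if j = k then 1 else 0))
        = (if j = k then (if i = l then cf n x i j * cf n z k l else 0) else 0) := by
      intro i j k l; by_cases h1 : i = l <;> by_cases h2 : j = k <;> simp [h1, h2]
    simp only [this, Finset.sum_ite_irrel, Finset.sum_const_zero, Finset.sum_ite_eq,
      Finset.mem_univ, if_true]
    simp only [fun i j => cf_symm n z i j]
    exact sum_cc n hn x z
  rw [T1, T2, T3]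
  ring

/-- The integral of the squared weighted sum of psi's. -/
lemma integral_sq_sum_psi (n m : ℕ) (hn : 1 ≤ n) (a : Fin m → ℝ) (x : Fin m → Fin n → ℝ) :
    ∫ y, (∑ i, a i * psi n (x i) y) ^ 2 ∂(stdGaussian n)
      = (2 / n) * ∑ i, ∑ k, a i * a k * psi n (x i) (x k) := by
  have hexp : (fun y => (∑ i, a i * psi n (x i) y) ^ 2)
      = fun y => ∑ i, ∑ k, (a i * a k) * (psi n (x i) y * psi n (x k) y) := by
    funext y
    rw [pow_two, Finset.sum_mul_sum]
    exact Finset.sum_congr rfl fun i _ => Finset.sum_congr rfl fun k _ => by ring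
  rw [hexp, integral_finset_sum _ fun i _ => integrable_finset_sum _ fun k _ =>
    ((integrable_psi_mul n (x i) (x k)).const_mul _)]
  rw [Finset.mul_sum]
  refine Finset.sum_congr rfl fun i _ => ?_
  rw [integral_finset_sum _ fun k _ => ((integrable_psi_mul n (x i) (x k)).const_mul _),
    Finset.mul_sum]
  refine Finset.sum_congr rfl fun k _ => ?_
  rw [integral_const_mul, integral_psi_mul n hn]
  ring

/-- Integrability of (Σ y_j²)² under the standard Gaussian. -/
lemma integrable_H (n : ℕ) :
    Integrable (fun y : Fin n → ℝ => (∑ j, y j * y j) ^ 2) (stdGaussian n) := by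
  have : (fun y : Fin n → ℝ => (∑ j, y j * y j) ^ 2)
      = fun y => ∑ j, ∑ k, y j * y j * (y k * y k) := by
    funext y
    rw [pow_two, Finset.sum_mul_sum]
  rw [this]
  refine integrable_finset_sum _ fun j _ => integrable_finset_sum _ fun k _ => ?_
  have : (fun y : Fin n → ℝ => y j * y j * (y k * y k)) = fun y => y j * y j * y k * y k := by
    funext y; ring
  rw [this]
  exact integrable_four n j j k k

lemma integrable_comp_eval (n m : ℕ) (i : Fin m) (h : (Fin n → ℝ) → ℝ)
    (hh : Integrable h (stdGaussian n)) :
    Integrable (fun x : Fin m → Fin n → ℝ => h (x i))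
      (Measure.pi fun _ => stdGaussian n) := by
  letI : MeasureSpace (Fin n → ℝ) := ⟨stdGaussian n⟩
  haveI : SigmaFinite (volume : Measure (Fin n → ℝ)) :=
    (inferInstance : SigmaFinite (stdGaussian n))
  haveI : IsProbabilityMeasure (volume : Measure (Fin n → ℝ)) := stdGaussian_prob n
  have hrw : (fun x : Fin m → Fin n → ℝ => h (x i))
      = fun x => ∏ t, (fun t y => if t = i then h y else 1) t (x t) := by
    funext x
    rw [Finset.prod_ite_eq' Finset.univ i (fun t => h (x t))]
    simp
  rw [hrw]
  exact Integrable.fintype_prod (f := fun t y => if t = i then h y else 1) fun t => by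
    by_cases ht : t = i
    · simpa [ht] using hh
    · simpa [ht] using (integrable_const (1:ℝ))

lemma abs_psi_le (n : ℕ) (hn : 1 ≤ n) (x y : Fin n → ℝ) :
    |psi n x y| ≤ 2 * ((∑ j, x j * x j) * (∑ j, y j * y j)) := by
  have hn1 : (1:ℝ) ≤ n := by exact_mod_cast hn
  have hA : (∑ j, x j * y j) ^ 2 ≤ (∑ j, x j * x j) * (∑ j, y j * y j) := by
    have := Finset.sum_mul_sq_le_sq_mul_sq Finset.univ x y
    simpa [pow_two] using this
  have hSx : (0:ℝ) ≤ ∑ j, x j * x j :=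
    Finset.sum_nonneg fun j _ => mul_self_nonneg _
  have hSy : (0:ℝ) ≤ ∑ j, y j * y j :=
    Finset.sum_nonneg fun j _ => mul_self_nonneg _
  have hA0 : (0:ℝ) ≤ (∑ j, x j * y j) ^ 2 := sq_nonneg _
  rw [psi]
  have h1 : (∑ j, x j * y j) ^ 2 / n ≤ (∑ j, x j * x j) * (∑ j, y j * y j) :=
    le_trans (div_le_self hA0 hn1) hA
  have h2 : ((∑ j, x j * x j) * (∑ j, y j * y j)) / (n:ℝ) ^ 2
      ≤ (∑ j, x j * x j) * (∑ j, y j * y j) :=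
    div_le_self (mul_nonneg hSx hSy) (by nlinarith)
  have h1' : (0:ℝ) ≤ (∑ j, x j * y j) ^ 2 / n := by positivity
  have h2' : (0:ℝ) ≤ ((∑ j, x j * x j) * (∑ j, y j * y j)) / (n:ℝ) ^ 2 := by positivity
  rw [abs_sub_comm]
  calc |((∑ j, x j * x j) * (∑ j, y j * y j)) / (n:ℝ)^2 - (∑ j, x j * y j) ^ 2 / n|
      ≤ ((∑ j, x j * x j) * (∑ j, y j * y j)) / (n:ℝ)^2 + (∑ j, x j * y j) ^ 2 / n := by
        rw [abs_sub_le_iff]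
        exact ⟨by linarith, by linarith⟩
    _ ≤ 2 * ((∑ j, x j * x j) * (∑ j, y j * y j)) := by linarith

lemma measurable_psi (n : ℕ) :
    Measurable (fun p : (Fin n → ℝ) × (Fin n → ℝ) => psi n p.1 p.2) := by
  unfold psi
  fun_prop

lemma measurable_G (n m : ℕ) (a : Fin m → ℝ) :
    Measurable (fun p : (Fin m → Fin n → ℝ) × (Fin n → ℝ) =>
      (∑ i, a i * psi n (p.1 i) p.2) ^ 2) := by
  unfold psi
  fun_prop

lemma measurable_g' (n m : ℕ) (a : Fin m → ℝ) :
    Measurable (fun x : Fin m → Fin n → ℝ =>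
      (2 / (n:ℝ)) * ∑ i, ∑ k, a i * a k * psi n (x i) (x k)) := by
  unfold psi
  fun_prop

lemma integrable_G (n m : ℕ) (hn : 1 ≤ n) (a : Fin m → ℝ) :
    Integrable (fun p : (Fin m → Fin n → ℝ) × (Fin n → ℝ) =>
        (∑ i, a i * psi n (p.1 i) p.2) ^ 2)
      ((Measure.pi fun _ : Fin m => stdGaussian n).prod (stdGaussian n)) := by
  set F : (Fin m → Fin n → ℝ) → ℝ :=
    fun x => ∑ i, 4 * a i ^ 2 * (∑ j, x i j * x i j) ^ 2 with hF
  set H : (Fin n → ℝ) → ℝ := fun y => (∑ j, y j * y j) ^ 2 with hH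
  have hFint : Integrable F (Measure.pi fun _ : Fin m => stdGaussian n) := by
    refine integrable_finset_sum _ fun i _ => ?_
    exact (integrable_comp_eval n m i H (integrable_H n)).const_mul _
  have hHint : Integrable H (stdGaussian n) := integrable_H n
  refine Integrable.mono' (((hFint.const_mul (m:ℝ)).mul_prod hHint)) ?_ ?_
  · exact (measurable_G n m a).aestronglyMeasurable
  · refine ae_of_all _ fun p => ?_
    have hb : ∀ i : Fin m, (a i * psi n (p.1 i) p.2) ^ 2
        ≤ 4 * a i ^ 2 * (∑ j, p.1 i j * p.1 i j) ^ 2 * (∑ j, p.2 j * p.2 j) ^ 2 := by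
      intro i
      have h1 := abs_psi_le n hn (p.1 i) p.2
      have h2 : psi n (p.1 i) p.2 ^ 2 ≤ (2 * ((∑ j, p.1 i j * p.1 i j) * (∑ j, p.2 j * p.2 j))) ^ 2 := by
        rw [← sq_abs]
        exact pow_le_pow_left₀ (abs_nonneg _) h1 2
      have := mul_le_mul_of_nonneg_left h2 (sq_nonneg (a i))
      calc (a i * psi n (p.1 i) p.2) ^ 2 = a i ^ 2 * psi n (p.1 i) p.2 ^ 2 := by ring
        _ ≤ a i ^ 2 * (2 * ((∑ j, p.1 i j * p.1 i j) * (∑ j, p.2 j * p.2 j))) ^ 2 := this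
        _ = 4 * a i ^ 2 * (∑ j, p.1 i j * p.1 i j) ^ 2 * (∑ j, p.2 j * p.2 j) ^ 2 := by ring
    have hcs : (∑ i, a i * psi n (p.1 i) p.2) ^ 2
        ≤ (m:ℝ) * ∑ i, (a i * psi n (p.1 i) p.2) ^ 2 := by
      have := sq_sum_le_card_mul_sum_sq
        (s := (Finset.univ : Finset (Fin m))) (f := fun i => a i * psi n (p.1 i) p.2)
      simpa using this
    have hsum : ∑ i, (a i * psi n (p.1 i) p.2) ^ 2
        ≤ ∑ i, 4 * a i ^ 2 * (∑ j, p.1 i j * p.1 i j) ^ 2 * (∑ j, p.2 j * p.2 j) ^ 2 :=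
      Finset.sum_le_sum fun i _ => hb i
    have hfin : (m:ℝ) * ∑ i, 4 * a i ^ 2 * (∑ j, p.1 i j * p.1 i j) ^ 2 * (∑ j, p.2 j * p.2 j) ^ 2
        = (m:ℝ) * F p.1 * H p.2 := by
      simp only [F, H]
      rw [mul_assoc]
      congr 1
      rw [Finset.sum_mul]
    rw [Real.norm_eq_abs, abs_of_nonneg (sq_nonneg _)]
    calc (∑ i, a i * psi n (p.1 i) p.2) ^ 2
        ≤ (m:ℝ) * ∑ i, (a i * psi n (p.1 i) p.2) ^ 2 := hcs
      _ ≤ (m:ℝ) * ∑ i, 4 * a i ^ 2 * (∑ j, p.1 i j * p.1 i j) ^ 2 * (∑ j, p.2 j * p.2 j) ^ 2 :=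
          mul_le_mul_of_nonneg_left hsum (Nat.cast_nonneg m)
      _ = (m:ℝ) * F p.1 * H p.2 := hfin

lemma integrable_g' (n m : ℕ) (hn : 1 ≤ n) (a : Fin m → ℝ) :
    Integrable (fun x : Fin m → Fin n → ℝ =>
        (2 / (n:ℝ)) * ∑ i, ∑ k, a i * a k * psi n (x i) (x k))
      (Measure.pi fun _ : Fin m => stdGaussian n) := by
  have hn1 : (1:ℝ) ≤ n := by exact_mod_cast hn
  set H : (Fin n → ℝ) → ℝ := fun y => (∑ j, y j * y j) ^ 2 with hH
  have hDint : Integrable (fun x : Fin m → Fin n → ℝ =>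
      2 * ∑ i, ∑ k, |a i * a k| * (H (x i) + H (x k)))
      (Measure.pi fun _ : Fin m => stdGaussian n) := by
    refine (integrable_finset_sum _ fun i _ => integrable_finset_sum _ fun k _ => ?_).const_mul 2
    exact ((integrable_comp_eval n m i H (integrable_H n)).add
      (integrable_comp_eval n m k H (integrable_H n))).const_mul _
  refine Integrable.mono' hDint (measurable_g' n m a).aestronglyMeasurable (ae_of_all _ fun x => ?_)
  rw [Real.norm_eq_abs, abs_mul]
  have h2n : |2 / (n:ℝ)| ≤ 2 := by
    rw [abs_of_nonneg (by positivity)]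
    rw [div_le_iff₀ (by linarith)]
    nlinarith
  have habs : |∑ i, ∑ k, a i * a k * psi n (x i) (x k)|
      ≤ ∑ i, ∑ k, |a i * a k| * (H (x i) + H (x k)) := by
    refine (Finset.abs_sum_le_sum_abs _ _).trans (Finset.sum_le_sum fun i _ => ?_)
    refine (Finset.abs_sum_le_sum_abs _ _).trans (Finset.sum_le_sum fun k _ => ?_)
    rw [abs_mul]
    have hψ := abs_psi_le n hn (x i) (x k)
    have hSi : (0:ℝ) ≤ ∑ j, x i j * x i j := Finset.sum_nonneg fun j _ => mul_self_nonneg _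
    have hSk : (0:ℝ) ≤ ∑ j, x k j * x k j := Finset.sum_nonneg fun j _ => mul_self_nonneg _
    have ham : 2 * ((∑ j, x i j * x i j) * (∑ j, x k j * x k j)) ≤ H (x i) + H (x k) := by
      simp only [hH]
      nlinarith [sq_nonneg ((∑ j, x i j * x i j) - (∑ j, x k j * x k j))]
    exact mul_le_mul_of_nonneg_left (hψ.trans ham) (abs_nonneg _)
  have hnn : (0:ℝ) ≤ ∑ i, ∑ k, |a i * a k| * (H (x i) + H (x k)) :=
    le_trans (abs_nonneg _) habs
  calc |2 / (n:ℝ)| * |∑ i, ∑ k, a i * a k * psi n (x i) (x k)|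
      ≤ 2 * (∑ i, ∑ k, |a i * a k| * (H (x i) + H (x k))) := by
        exact mul_le_mul h2n habs (abs_nonneg _) (by norm_num)
    _ = 2 * ∑ i, ∑ k, |a i * a k| * (H (x i) + H (x k)) := rfl

end AuxiliaryLemmas

/-- If `u₁, …, u_m, v` are independent standard `n`-dimensional Gaussian vectors, then
almost surely `E[(Σᵢ aᵢ ψ(uᵢ, v))² | σ(u₁, …, u_m)] = (2/n) Σᵢ Σₖ aᵢ aₖ ψ(uᵢ, uₖ)`. -/
theorem condexp_sq_weighted_sum_psi {Ω : Type*} [MeasurableSpace Ω] (μ : Measure Ω)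
    [IsProbabilityMeasure μ]
    (n m : ℕ) (hn : 1 ≤ n) (hm : 1 ≤ m)
    (a : Fin m → ℝ) (u : Fin m → Ω → (Fin n → ℝ)) (v : Ω → (Fin n → ℝ))
    (hu : ∀ i, Measurable (u i)) (hv : Measurable v)
    (hindep : iIndepFun
      (Fin.snoc (α := fun _ : Fin (m + 1) => Ω → (Fin n → ℝ)) u v) μ)
    (hud : ∀ i, Measure.map (u i) μ = stdGaussian n)
    (hvd : Measure.map v μ = stdGaussian n) :
    μ[(fun ω => (∑ i, a i * psi n (u i ω) (v ω)) ^ 2) |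
        MeasurableSpace.comap (fun ω => fun i => u i ω) inferInstance]
      =ᵐ[μ] fun ω => (2 / n) * ∑ i, ∑ k, a i * a k * psi n (u i ω) (u k ω) := by
  have hU : Measurable (fun ω => fun i => u i ω) := measurable_pi_lambda _ hu
  have hfmeas : ∀ p, Measurable
      (Fin.snoc (α := fun _ : Fin (m + 1) => Ω → (Fin n → ℝ)) u v p) := by
    intro p
    induction p using Fin.lastCases with
    | last => simpa [Fin.snoc_last] using hv
    | cast i => simpa [Fin.snoc_castSucc] using hu i
  -- the law of U
  have hmapU : Measure.map (fun ω => fun i => u i ω) μ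
      = (Measure.pi fun _ : Fin m => stdGaussian n) := by
    refine (Measure.pi_eq fun s hs => ?_).symm
    rw [Measure.map_apply hU (MeasurableSet.univ_pi hs)]
    have hpre : (fun ω => fun i => u i ω) ⁻¹' (Set.univ.pi s) = ⋂ i, u i ⁻¹' s i := by
      ext ω; simp [Set.mem_pi]
    rw [hpre]
    have hsets : ∀ p : Fin (m + 1), p ∈ Finset.univ → MeasurableSet
        ((Fin.snoc (α := fun _ : Fin (m + 1) => Set (Fin n → ℝ)) s Set.univ) p) := by
      intro p _
      induction p using Fin.lastCases with
      | last => simpa [Fin.snoc_last] using MeasurableSet.univ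
      | cast i => simpa [Fin.snoc_castSucc] using hs i
    have key := hindep.measure_inter_preimage_eq_mul Finset.univ hsets
    have hset2 : (⋂ p ∈ Finset.univ, (Fin.snoc (α := fun _ : Fin (m + 1) => Ω → (Fin n → ℝ)) u v p)
        ⁻¹' ((Fin.snoc (α := fun _ : Fin (m + 1) => Set (Fin n → ℝ)) s Set.univ) p))
        = ⋂ i, u i ⁻¹' s i := by
      ext ω
      simp only [Set.mem_iInter, Finset.mem_univ, Set.mem_preimage, forall_true_left]
      constructor
      · intro h i
        have := h (Fin.castSucc i)
        rwa [Fin.snoc_castSucc, Fin.snoc_castSucc] at this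
      · intro h p
        induction p using Fin.lastCases with
        | last => rw [Fin.snoc_last, Fin.snoc_last]; trivial
        | cast i => rw [Fin.snoc_castSucc, Fin.snoc_castSucc]; exact h i
    rw [hset2] at key
    rw [key, Fin.prod_univ_castSucc]
    simp only [Fin.snoc_castSucc, Fin.snoc_last, Set.preimage_univ, measure_univ, mul_one]
    refine Finset.prod_congr rfl fun i _ => ?_
    rw [← hud i, Measure.map_apply (hu i) (hs i)]
  -- independence of U and v
  have hIndepUV : IndepFun (fun ω => fun i => u i ω) v μ := by
    have hdisj : Disjoint (Finset.univ.image (Fin.castSucc (n := m))) {Fin.last m} := by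
      simp only [Finset.disjoint_singleton_right, Finset.mem_image]
      rintro ⟨i, -, hi⟩
      exact absurd hi (Fin.castSucc_lt_last i).ne
    have h2 := hindep.indepFun_finset (Finset.univ.image Fin.castSucc) {Fin.last m} hdisj hfmeas
    have h3 := h2.comp
      (φ := fun w : (Finset.univ.image (Fin.castSucc (n := m))) → (Fin n → ℝ) =>
        fun i : Fin m => w ⟨Fin.castSucc i, by simp [(Fin.castSucc_lt_last i).ne]⟩)
      (ψ := fun w : ({Fin.last m} : Finset (Fin (m + 1))) → (Fin n → ℝ) =>
        w ⟨Fin.last m, by simp⟩)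
      (_mγ' := inferInstance)
      (measurable_pi_lambda _ fun i => measurable_pi_apply _) (measurable_pi_apply _)
    convert h3 using 1
    · funext ω; funext i
      simp [Function.comp, Fin.snoc_castSucc]
    · funext ω
      simp [Function.comp, Fin.snoc_last]
  -- law of the pair
  have hpairmeas : Measurable (fun ω => ((fun i => u i ω), v ω)) := hU.prodMk hv
  have hmapPair : Measure.map (fun ω => ((fun i => u i ω), v ω)) μ
      = (Measure.pi fun _ : Fin m => stdGaussian n).prod (stdGaussian n) := by
    rw [← hmapU, ← hvd]
    exact (indepFun_iff_map_prod_eq_prod_map_map hU.aemeasurable hv.aemeasurable).mp hIndepUV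
  have hmle : MeasurableSpace.comap (fun ω => fun i => u i ω) inferInstance ≤ _ := hU.comap_le
  haveI : SigmaFinite (μ.trim hmle) := inferInstance
  -- integrability of f
  have hfint : Integrable (fun ω => (∑ i, a i * psi n (u i ω) (v ω)) ^ 2) μ := by
    have h1 : Integrable (fun p : (Fin m → Fin n → ℝ) × (Fin n → ℝ) =>
        (∑ i, a i * psi n (p.1 i) p.2) ^ 2)
        (Measure.map (fun ω => ((fun i => u i ω), v ω)) μ) := by
      rw [hmapPair]; exact integrable_G n m hn a
    exact (integrable_map_measure (measurable_G n m a).aestronglyMeasurable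
      hpairmeas.aemeasurable).mp h1
  -- integrability of g
  have hgint : Integrable (fun ω => (2 / (n:ℝ)) * ∑ i, ∑ k, a i * a k *
      psi n (u i ω) (u k ω)) μ := by
    have h1 : Integrable (fun x : Fin m → Fin n → ℝ =>
        (2 / (n:ℝ)) * ∑ i, ∑ k, a i * a k * psi n (x i) (x k))
        (Measure.map (fun ω => fun i => u i ω) μ) := by
      rw [hmapU]; exact integrable_g' n m hn a
    exact (integrable_map_measure (measurable_g' n m a).aestronglyMeasurable
      hU.aemeasurable).mp h1
  refine (ae_eq_condExp_of_forall_setIntegral_eq hmle hfint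
    (fun s _ _ => hgint.integrableOn) (fun s hs _ => ?_) ?_).symm
  · -- set integral equality
    obtain ⟨A, hA, rfl⟩ := hs
    have hLHS : ∫ ω in (fun ω => fun i => u i ω) ⁻¹' A,
        (2 / (n:ℝ)) * ∑ i, ∑ k, a i * a k * psi n (u i ω) (u k ω) ∂μ
        = ∫ x in A, (2 / (n:ℝ)) * ∑ i, ∑ k, a i * a k * psi n (x i) (x k)
            ∂(Measure.pi fun _ : Fin m => stdGaussian n) := by
      rw [← hmapU, setIntegral_map hA (measurable_g' n m a).aestronglyMeasurable
        hU.aemeasurable]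
    have hpre : (fun ω => fun i => u i ω) ⁻¹' A
        = (fun ω => ((fun i => u i ω), v ω)) ⁻¹' (A ×ˢ Set.univ) := by
      ext ω; simp
    have hGrest : Integrable (fun p : (Fin m → Fin n → ℝ) × (Fin n → ℝ) =>
        (∑ i, a i * psi n (p.1 i) p.2) ^ 2)
        (((Measure.pi fun _ : Fin m => stdGaussian n).restrict A).prod (stdGaussian n)) := by
      have := (integrable_G n m hn a).restrict (s := A ×ˢ Set.univ)
      rwa [← Measure.prod_restrict, Measure.restrict_univ] at this
    have hRHS : ∫ ω in (fun ω => fun i => u i ω) ⁻¹' A,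
        (∑ i, a i * psi n (u i ω) (v ω)) ^ 2 ∂μ
        = ∫ x in A, (2 / (n:ℝ)) * ∑ i, ∑ k, a i * a k * psi n (x i) (x k)
            ∂(Measure.pi fun _ : Fin m => stdGaussian n) := by
      rw [hpre, ← setIntegral_map (hA.prod MeasurableSet.univ)
        (measurable_G n m a).aestronglyMeasurable hpairmeas.aemeasurable, hmapPair]
      show ∫ p, (∑ i, a i * psi n (p.1 i) p.2) ^ 2
          ∂(((Measure.pi fun _ : Fin m => stdGaussian n).prod (stdGaussian n)).restrict
            (A ×ˢ Set.univ)) = _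
      rw [← Measure.prod_restrict, Measure.restrict_univ]
      rw [integral_prod _ hGrest]
      refine integral_congr_ae (ae_of_all _ fun x => ?_)
      exact integral_sq_sum_psi n m hn a x
    rw [hLHS, hRHS]
  · -- strong measurability
    refine StronglyMeasurable.aestronglyMeasurable ?_
    have hUm : Measurable[MeasurableSpace.comap (fun ω => fun i => u i ω) inferInstance]
        (fun ω => fun i => u i ω) := measurable_iff_comap_le.mpr le_rfl
    exact ((measurable_g' n m a).comp hUm).stronglyMeasurable
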